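/- Under the same setting, the vector field ξ satisfies ξ(Im(V^k φ)) = |g h φ|² · Re(V^{k+1} φ). -/

import Mathlib

open Complex

/-- Iterated operator `V` applied to `φ = g_z/(g²h)`:
`V⁰φ = φ`, `V^{k+1}φ = (g/g_z)·(V^kφ)_z`. -/
noncomputable def Vpow (g h : ℂ → ℂ) : ℕ → ℂ → ℂ
  | 0 => fun z => deriv g z / (g z ^ 2 * h z)
  | (k + 1) => fun z => (g z / deriv g z) * deriv (Vpow g h k) z

/-- Wirtinger derivative `u_z = ½(u_x - i u_y)` of a real-valued function. -/
noncomputable def wirtRe (u : ℂ → ℝ) (z : ℂ) : ℂ :=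
  (1/2 : ℂ) * ((fderiv ℝ u z 1 : ℝ) - Complex.I * ((fderiv ℝ u z Complex.I : ℝ) : ℂ))

/-- The vector field `ξ = i·overline{ghφ}·∂_z - i·ghφ·∂_{z̄}` applied to a
real-valued function `u` (using `u_{z̄} = conj u_z`). -/
noncomputable def xiAct (g h : ℂ → ℂ) (u : ℂ → ℝ) (z : ℂ) : ℂ :=
  Complex.I * (starRingEnd ℂ) (g z * h z * Vpow g h 0 z) * wirtRe u z
    - Complex.I * (g z * h z * Vpow g h 0 z) * (starRingEnd ℂ) (wirtRe u z)

lemma vpow_analytic (D : Set ℂ) (hD : IsOpen D) (g h : ℂ → ℂ)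
    (hg : DifferentiableOn ℂ g D) (hh : DifferentiableOn ℂ h D)
    (hg0 : ∀ z ∈ D, g z ≠ 0) (hh0 : ∀ z ∈ D, h z ≠ 0)
    (hg1 : ∀ z ∈ D, deriv g z ≠ 0) (k : ℕ) :
    AnalyticOnNhd ℂ (Vpow g h k) D := by
  have hga : AnalyticOnNhd ℂ g D := hg.analyticOnNhd hD
  have hha : AnalyticOnNhd ℂ h D := hh.analyticOnNhd hD
  induction k with
  | zero =>
      exact hga.deriv.div ((hga.pow 2).mul hha)
        (fun z hz => mul_ne_zero (pow_ne_zero 2 (hg0 z hz)) (hh0 z hz))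
  | succ k ih =>
      exact (hga.div hga.deriv hg1).mul ih.deriv

lemma wirtRe_im {f : ℂ → ℂ} {z c : ℂ} (hf : HasDerivAt f c z) :
    wirtRe (fun w => (f w).im) z = (1/2 : ℂ) * ((c.im : ℂ) - Complex.I * (c.re : ℂ)) := by
  have hL : HasFDerivAt f ((ContinuousLinearMap.smulRight (1 : ℂ →L[ℂ] ℂ) c).restrictScalars ℝ) z :=
    hf.hasFDerivAt.restrictScalars ℝ
  have hF : HasFDerivAt (fun w => (f w).im)
      (Complex.imCLM.comp ((ContinuousLinearMap.smulRight (1 : ℂ →L[ℂ] ℂ) c).restrictScalars ℝ)) z :=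
    Complex.imCLM.hasFDerivAt.comp z hL
  rw [wirtRe, hF.fderiv]
  simp [Complex.mul_im]

lemma re_cast (w : ℂ) : (w.re : ℂ) = (w + (starRingEnd ℂ) w)/2 := by
  rw [Complex.add_conj]; push_cast; ring

lemma key (q c : ℂ) (hq : q ≠ 0) :
    Complex.I * (starRingEnd ℂ) q * ((1/2 : ℂ) * ((c.im : ℂ) - Complex.I * (c.re : ℂ)))
      - Complex.I * q * (starRingEnd ℂ) ((1/2 : ℂ) * ((c.im : ℂ) - Complex.I * (c.re : ℂ)))
    = ((‖q‖ ^ 2 * ((1/q) * c).re : ℝ) : ℂ) := by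
  have hw : (1/2 : ℂ) * ((c.im : ℂ) - Complex.I * (c.re : ℂ)) = -Complex.I * c / 2 := by
    apply Complex.ext <;> simp <;> ring
  have hcq : (starRingEnd ℂ) q ≠ 0 := by simpa using hq
  rw [hw, Complex.ofReal_mul, Complex.sq_norm, ← Complex.mul_conj, re_cast]
  simp only [map_mul, map_div₀, map_neg, map_one, Complex.conj_I, Complex.conj_conj,
    map_ofNat, Complex.conj_ofReal]
  ring_nf
  simp only [Complex.I_sq]
  field_simp

theorem stmt9 (D : Set ℂ) (hD : IsOpen D) (g h : ℂ → ℂ)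
    (hg : DifferentiableOn ℂ g D) (hh : DifferentiableOn ℂ h D)
    (hg0 : ∀ z ∈ D, g z ≠ 0) (hh0 : ∀ z ∈ D, h z ≠ 0)
    (hg1 : ∀ z ∈ D, deriv g z ≠ 0)
    (k : ℕ) (z : ℂ) (hz : z ∈ D) (hgz : ‖g z‖ = 1) :
    xiAct g h (fun w => (Vpow g h k w).im) z
      = (((‖g z * h z * Vpow g h 0 z‖ ^ 2)
          * (Vpow g h (k + 1) z).re : ℝ) : ℂ) := by
  have hfa : AnalyticAt ℂ (Vpow g h k) z :=
    vpow_analytic D hD g h hg hh hg0 hh0 hg1 k z hz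
  have hf : HasDerivAt (Vpow g h k) (deriv (Vpow g h k) z) z :=
    hfa.differentiableAt.hasDerivAt
  set c := deriv (Vpow g h k) z with hc
  have ha : g z ≠ 0 := hg0 z hz
  have hb : h z ≠ 0 := hh0 z hz
  have hd : deriv g z ≠ 0 := hg1 z hz
  have h0 : Vpow g h 0 z = deriv g z / (g z ^ 2 * h z) := rfl
  have hq : g z * h z * Vpow g h 0 z = deriv g z / g z := by
    rw [h0]; field_simp
  have h1 : Vpow g h (k + 1) z = (1 / (deriv g z / g z)) * c := by
    show (g z / deriv g z) * c = _
    rw [one_div_div]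
  rw [xiAct, wirtRe_im hf, hq, h1]
  exact key (deriv g z / g z) c (div_ne_zero hd ha)
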